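/- arXiv:2203.00318 — 8 statements merged into one kernel-verified Lean document; each statement's English description precedes it below -/
import Mathlib

section
/- Let α > 0, β ≥ 0, h > 0 and let c be a real number with 0 < c < α/2 + β/h². Then for every a ∈ (0, 2π) and every complex number z satisfying z² + (α − (β/h²)(e^{ia} − 1))·z − α·c·(e^{ia} − 1) = 0, the real part of z is strictly negative. (This is the linear stability of the uniform steady state of the single-lane model under the condition V'(h) < α/2 + β/h², with c = V'(h).) -/
open Real Complex

/-- Linear stability of the uniform steady state of the single-lane model:
if `0 < c < α/2 + β/h²` (with `c = V'(h)`), then for every Fourier mode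
`a ∈ (0, 2π)` all roots of the characteristic quadratic
`z² + (α - (β/h²)(e^{ia} - 1)) z - α c (e^{ia} - 1) = 0`
have strictly negative real part. -/
theorem single_lane_stability
    (α β h c : ℝ) (hα : 0 < α) (hβ : 0 ≤ β) (hh : 0 < h)
    (hc0 : 0 < c) (hc : c < α / 2 + β / h ^ 2) :
    ∀ a ∈ Set.Ioo (0 : ℝ) (2 * Real.pi), ∀ z : ℂ,
      z ^ 2 + ((α : ℂ) - ((β : ℂ) / (h : ℂ) ^ 2) * (Complex.exp (Complex.I * a) - 1)) * z
          - (α : ℂ) * (c : ℂ) * (Complex.exp (Complex.I * a) - 1) = 0 →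
      z.re < 0 := by
  intro a ha z heq
  set b : ℝ := β / h ^ 2 with hb
  have hb0 : 0 ≤ b := div_nonneg hβ (by positivity)
  set w : ℂ := Complex.exp (Complex.I * a) - 1 with hwdef
  -- w ≠ 0
  have hwne : w ≠ 0 := by
    rw [hwdef, sub_ne_zero]
    intro hone
    rw [Complex.exp_eq_one_iff] at hone
    obtain ⟨n, hn⟩ := hone
    have him := congrArg Complex.im hn
    simp [Complex.mul_im] at him
    have ha' : a = (n : ℝ) * (2 * Real.pi) := by
      rw [him]
    obtain ⟨ha1, ha2⟩ := ha
    have hpi := Real.pi_pos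
    have hn0 : (0:ℝ) < n := by nlinarith
    have hn1 : (n:ℝ) < 1 := by nlinarith
    have : (0:ℤ) < n := by exact_mod_cast hn0
    have : (n:ℤ) < 1 := by exact_mod_cast hn1
    omega
  -- |w+1| = 1 gives normSq w + 2 re w = 0
  have hw : Complex.normSq w + 2 * w.re = 0 := by
    have h1 : Complex.normSq (w + 1) = 1 := by
      rw [hwdef]
      simp [Complex.normSq_eq_norm_sq, Complex.norm_exp]
    have h2 : Complex.normSq (w + 1) = Complex.normSq w + 2 * w.re + 1 := by
      simp [Complex.normSq_apply, Complex.add_re, Complex.add_im]; ring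
    linarith [h2 ▸ h1]
  -- factor the equation
  have hbc : ((β : ℂ) / (h : ℂ) ^ 2) = (b : ℝ) := by
    rw [hb]; push_cast; ring
  have hv : z ^ 2 + (α : ℂ) * z = w * ((b : ℂ) * z + (α : ℂ) * c) := by
    rw [← hbc]
    linear_combination heq
  -- z ≠ 0
  have hz0 : z ≠ 0 := by
    intro h0
    rw [h0] at hv
    simp at hv
    rcases hv with hv | hv | hv
    · exact hwne hv
    · exact hα.ne' (by exact_mod_cast hv)
    · exact hc0.ne' (by exact_mod_cast hv)
  -- key real identity
  set v : ℂ := (b : ℂ) * z + (α : ℂ) * c with hvdef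
  have hkey : Complex.normSq (z ^ 2 + (α : ℂ) * z)
      + 2 * ((z ^ 2 + (α : ℂ) * z) * (starRingEnd ℂ) v).re = 0 := by
    rw [hv]
    have h3 : (w * v * (starRingEnd ℂ) v) = w * (Complex.normSq v : ℂ) := by
      rw [mul_assoc, Complex.mul_conj]
    rw [Complex.normSq_mul, h3]
    have h4 : (w * (Complex.normSq v : ℂ)).re = w.re * Complex.normSq v := by
      simp
    rw [h4]
    linear_combination Complex.normSq v * hw
  -- expand into coordinates
  set x : ℝ := z.re with hx
  set y : ℝ := z.im with hy
  by_contra hcon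
  push_neg at hcon
  have hxy : x ≠ 0 ∨ y ≠ 0 := by
    by_contra hh'
    push_neg at hh'
    exact hz0 (Complex.ext hh'.1 hh'.2)
  have hexp : (x^2 - y^2 + α*x)^2 + (2*x*y + α*y)^2
      + 2*((x^2 - y^2 + α*x)*(b*x + α*c) + (2*x*y + α*y)*(b*y)) = 0 := by
    have := hkey
    simp only [hvdef, pow_two, Complex.normSq_apply, Complex.mul_re, Complex.mul_im,
      Complex.add_re, Complex.add_im, Complex.sub_re, Complex.sub_im,
      Complex.ofReal_re, Complex.ofReal_im, Complex.conj_re, Complex.conj_im,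
      map_add, map_mul] at this
    linear_combination this
  have hcb : 0 < α / 2 + b - c := by linarith
  have hsum : (x^2+y^2)^2 + 2*(α+b)*x*(x^2+y^2) + (α^2+2*α*b+2*α*c)*x^2
      + 2*α^2*c*x + 2*α*y^2*(α/2+b-c) = 0 := by linear_combination hexp
  have t1 : 0 ≤ (x^2+y^2)^2 := sq_nonneg _
  have t2 : 0 ≤ 2*(α+b)*x*(x^2+y^2) := by positivity
  have t3 : 0 ≤ (α^2+2*α*b+2*α*c)*x^2 := by positivity
  have t4 : 0 ≤ 2*α^2*c*x := by positivity
  have t5 : 0 ≤ 2*α*y^2*(α/2+b-c) := by positivity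
  rcases hxy with hx0 | hy0
  · have hxpos : 0 < x := lt_of_le_of_ne hcon (Ne.symm hx0)
    have : 0 < 2*α^2*c*x := by positivity
    linarith
  · have : 0 < 2*α*y^2*(α/2+b-c) := by positivity
    linarith
end

section
/- Let α > 0, β ≥ 0, h > 0, c > 0 and a ∈ (0, 2π) with a ≠ π. If z ∈ ℂ has Re(z) = 0 and satisfies z² + (α − (β/h²)(e^{ia} − 1))·z − α·c·(e^{ia} − 1) = 0, then c = α/(2cos²(a/2)) + β/h² + 2tan²(a/2)·(β/h²)·(β/(αh²) + 1). That is, a purely imaginary root of the characteristic quadratic can occur only on the critical curve. -/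
open Real Complex

/-- A purely imaginary root of the characteristic quadratic
`z² + (α - (β/h²)(e^{ia} - 1)) z - α c (e^{ia} - 1) = 0`
can occur only on the critical curve
`c = α/(2 cos²(a/2)) + β/h² + 2 tan²(a/2) (β/h²)(β/(α h²) + 1)`. -/
theorem critical_curve_of_purely_imaginary_root
    (α β h c : ℝ) (hα : 0 < α) (hβ : 0 ≤ β) (hh : 0 < h) (hc : 0 < c)
    (a : ℝ) (ha : a ∈ Set.Ioo (0 : ℝ) (2 * Real.pi)) (haπ : a ≠ Real.pi)
    (z : ℂ) (hre : z.re = 0)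
    (hz : z ^ 2 + ((α : ℂ) - ((β : ℂ) / (h : ℂ) ^ 2) * (Complex.exp (Complex.I * a) - 1)) * z
        - (α : ℂ) * (c : ℂ) * (Complex.exp (Complex.I * a) - 1) = 0) :
    c = α / (2 * Real.cos (a / 2) ^ 2) + β / h ^ 2
        + 2 * Real.tan (a / 2) ^ 2 * (β / h ^ 2) * (β / (α * h ^ 2) + 1) := by
  obtain ⟨ha0, ha2⟩ := ha
  have hh0 : (h : ℝ) ≠ 0 := hh.ne'
  have hhalf0 : 0 < a / 2 := by linarith
  have hhalfπ : a / 2 < Real.pi := by linarith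
  set s2 := Real.sin (a / 2) with hs2def
  set c2 := Real.cos (a / 2) with hc2def
  have hs2pos : 0 < s2 := Real.sin_pos_of_pos_of_lt_pi hhalf0 hhalfπ
  have hc2ne : c2 ≠ 0 := by
    intro h0
    rcases Real.cos_eq_zero_iff.mp h0 with ⟨n, hn⟩
    have hπ := Real.pi_pos
    have hr1 : (0:ℝ) < 2 * (n:ℝ) + 1 := by nlinarith
    have hr2 : (2 * (n:ℝ) + 1) < 2 := by nlinarith
    have hi1 : (0:ℤ) < 2 * n + 1 := by exact_mod_cast hr1
    have hi2 : (2 * n + 1 : ℤ) < 2 := by exact_mod_cast hr2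
    have hn0 : n = 0 := by omega
    rw [hn0] at hn
    apply haπ
    push_cast at hn
    linarith
  have hpy : s2 ^ 2 + c2 ^ 2 = 1 := Real.sin_sq_add_cos_sq _
  have hsin : Real.sin a = 2 * s2 * c2 := by
    rw [show a = 2 * (a / 2) by ring, Real.sin_two_mul]
  have hcos : Real.cos a = 2 * c2 ^ 2 - 1 := by
    rw [show a = 2 * (a / 2) by ring, Real.cos_two_mul]
  have hexp : Complex.exp (Complex.I * a) = (Real.cos a : ℂ) + (Real.sin a : ℂ) * Complex.I := by
    rw [mul_comm, Complex.exp_mul_I]; push_cast; rfl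
  rw [hexp, Complex.ext_iff] at hz
  obtain ⟨h1, h2⟩ := hz
  simp [pow_two, Complex.mul_re, Complex.mul_im, Complex.div_re, Complex.div_im, hre,
    Complex.cos_ofReal_re, Complex.sin_ofReal_re] at h1 h2
  set y := z.im with hydef
  have hβh : β * (h * h) / (h * h * (h * h)) = β / h ^ 2 := by
    field_simp
  rw [hβh] at h1 h2
  rw [hsin, hcos] at h1 h2
  set b := β / h ^ 2 with hbdef
  have hb0 : 0 ≤ b := div_nonneg hβ (by positivity)
  set D := α + b * (2 * s2 ^ 2) with hDdef
  have hD : 0 < D := by positivity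
  have hyD : y * D = 2 * α * c * (s2 * c2) := by
    linear_combination h2 + 2 * y * b * hpy
  have hy : y = 2 * α * c * (s2 * c2) / D := (eq_div_iff hD.ne').mpr hyD
  rw [hy] at h1
  field_simp [hD.ne'] at h1
  have hne : (2 * s2 ^ 2 * α * c * D : ℝ) ≠ 0 := by positivity
  have key2 : (2 * s2 ^ 2 * α * c * D) * (2 * α * c * c2 ^ 2) =
      (2 * s2 ^ 2 * α * c * D) * (2 * b * c2 ^ 2 * D + D ^ 2) := by
    linear_combination (-D) * h1 - 2 * α * c * D ^ 3 * hpy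
  have key : 2 * α * c * c2 ^ 2 = 2 * b * c2 ^ 2 * D + D ^ 2 :=
    mul_left_cancel₀ hne key2
  have keyE : 2 * α * c * c2 ^ 2
      = 2 * b * c2 ^ 2 * (α + b * (2 * s2 ^ 2)) + (α + b * (2 * s2 ^ 2)) ^ 2 := by
    rw [← hDdef]; exact key
  rw [Real.tan_eq_sin_div_cos, ← hs2def, ← hc2def]
  have hba : β / (α * h ^ 2) = b / α := by rw [hbdef]; ring
  rw [hba]
  clear_value s2 c2 b
  clear hy h1 h2 hyD key key2 hDdef hD hne hβh
  field_simp
  linear_combination keyE + 4 * s2 ^ 2 * b ^ 2 * hpy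
end

section
/- Let α > 0, β ≥ 0, h > 0 and a ∈ (0, 2π) with a ≠ π. If c > F(a) := α/(2cos²(a/2)) + β/h² + 2tan²(a/2)·(β/h²)·(β/(αh²) + 1), then there exists z ∈ ℂ with Re(z) > 0 satisfying z² + (α − (β/h²)(e^{ia} − 1))·z − α·c·(e^{ia} − 1) = 0. That is, above the critical curve the Fourier mode a is linearly unstable. -/
open Real Complex


private lemma aux_mgt (p x y m : ℝ) (hG : 0 < y ^ 2 + 4 * p ^ 2 * x - 4 * p ^ 4)
    (hm0 : 0 ≤ m) (hm2 : m ^ 2 = x ^ 2 + y ^ 2) : 2 * p ^ 2 - x < m := by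
  by_contra hle
  push_neg at hle
  have h0 : 0 ≤ 2 * p ^ 2 - x := le_trans hm0 hle
  nlinarith

private lemma aux_mge (x y m : ℝ) (hm0 : 0 ≤ m) (hm2 : m ^ 2 = x ^ 2 + y ^ 2) : 0 ≤ m - x := by
  by_contra hlt
  push_neg at hlt
  nlinarith [sq_nonneg y]

private lemma aux_ult (p u : ℝ) (hu0 : 0 ≤ u) (hp : 0 < p) (h2 : p ^ 2 < u ^ 2) : p < u :=
  lt_of_pow_lt_pow_left₀ 2 hu0 h2

set_option maxHeartbeats 1600000 in
/-- Above the critical curve the Fourier mode `a` is linearly unstable: if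
`c > F(a) = α/(2 cos²(a/2)) + β/h² + 2 tan²(a/2) (β/h²)(β/(α h²) + 1)`,
then the characteristic quadratic has a root with strictly positive real part. -/
theorem instability_above_critical_curve
    (α β h c : ℝ) (hα : 0 < α) (hβ : 0 ≤ β) (hh : 0 < h)
    (a : ℝ) (ha : a ∈ Set.Ioo (0 : ℝ) (2 * Real.pi)) (haπ : a ≠ Real.pi)
    (hc : c > α / (2 * Real.cos (a / 2) ^ 2) + β / h ^ 2
        + 2 * Real.tan (a / 2) ^ 2 * (β / h ^ 2) * (β / (α * h ^ 2) + 1)) :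
    ∃ z : ℂ, 0 < z.re ∧
      z ^ 2 + ((α : ℂ) - ((β : ℂ) / (h : ℂ) ^ 2) * (Complex.exp (Complex.I * a) - 1)) * z
        - (α : ℂ) * (c : ℂ) * (Complex.exp (Complex.I * a) - 1) = 0 := by
  obtain ⟨ha0, ha2⟩ := ha
  have hπ : (0:ℝ) < Real.pi := Real.pi_pos
  obtain ⟨k, hk⟩ : ∃ k : ℝ, k = β / h ^ 2 := ⟨_, rfl⟩
  obtain ⟨cc, hccdef⟩ : ∃ cc : ℝ, cc = Real.cos (a / 2) := ⟨_, rfl⟩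
  obtain ⟨ss, hssdef⟩ : ∃ ss : ℝ, ss = Real.sin (a / 2) := ⟨_, rfl⟩
  obtain ⟨s, hsdef⟩ : ∃ s : ℝ, s = Real.sin a := ⟨_, rfl⟩
  obtain ⟨co, hcodef⟩ : ∃ co : ℝ, co = Real.cos a := ⟨_, rfl⟩
  rw [← hk, ← hccdef] at hc
  have hk0 : 0 ≤ k := hk ▸ div_nonneg hβ (by positivity)
  have hpyth : ss ^ 2 + cc ^ 2 = 1 := by
    rw [hssdef, hccdef]; exact Real.sin_sq_add_cos_sq _
  have hss0 : 0 < ss := by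
    rw [hssdef]; exact Real.sin_pos_of_pos_of_lt_pi (by linarith) (by linarith)
  have hccne : cc ≠ 0 := by
    rw [hccdef]
    intro h0
    obtain ⟨n, hn⟩ := Real.cos_eq_zero_iff.mp h0
    have hn' : a = (2 * (n:ℝ) + 1) * Real.pi := by linarith [hn]
    have hr0 : 0 < (2 * (n:ℝ) + 1) * Real.pi := hn' ▸ ha0
    have hr2 : (2 * (n:ℝ) + 1) * Real.pi < 2 * Real.pi := hn' ▸ ha2
    have h1 : (0:ℝ) < 2 * (n:ℝ) + 1 := by
      rcases mul_pos_iff.mp hr0 with ⟨hh1, _⟩ | ⟨_, hh2⟩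
      · exact hh1
      · linarith
    have h2 : 2 * (n:ℝ) + 1 < 2 := lt_of_mul_lt_mul_right hr2 hπ.le
    have hn0 : n = 0 := by
      have h1' : (-1:ℝ) < 2 * n := by linarith
      have h2' : (2:ℝ) * n < 1 := by linarith
      have e1 : (-1:ℤ) < 2 * n := by exact_mod_cast h1'
      have e2 : (2:ℤ) * n < 1 := by exact_mod_cast h2'
      omega
    apply haπ
    rw [hn', hn0]
    push_cast; ring
  have hcc2 : 0 < cc ^ 2 := by positivity
  have hsin : s = 2 * ss * cc := by
    rw [hsdef, hssdef, hccdef, ← Real.sin_two_mul]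
    congr 1; ring
  have hco2 : co = 2 * cc ^ 2 - 1 := by
    rw [hcodef, hccdef, ← Real.cos_two_mul]
    congr 1; ring
  have hco : co = 1 - 2 * ss ^ 2 := by linarith [hpyth, hco2]
  -- c is positive
  have hc0 : 0 < c := by
    have h1 : 0 < α / (2 * cc ^ 2) := by positivity
    have h3 : 0 ≤ 2 * Real.tan (a/2) ^ 2 * k * (β / (α * h ^ 2) + 1) := by
      have t : 0 ≤ β / (α * h ^ 2) := by positivity
      have t2 : 0 ≤ β / (α * h ^ 2) + 1 := by linarith
      exact mul_nonneg (mul_nonneg (by positivity) hk0) t2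
    linarith [hc]
  obtain ⟨p, hp⟩ : ∃ p : ℝ, p = α + k * (1 - co) := ⟨_, rfl⟩
  obtain ⟨q, hq⟩ : ∃ q : ℝ, q = -(k * s) := ⟨_, rfl⟩
  have hpe : p = α + 2 * k * ss ^ 2 := by rw [hp, hco]; ring
  have hp0 : 0 < p := by
    have hnn : 0 ≤ 2 * k * ss ^ 2 := by positivity
    rw [hpe]; linarith
  -- master inequality
  have htan : Real.tan (a/2) = ss / cc := by
    rw [hssdef, hccdef]; exact Real.tan_eq_sin_div_cos _
  have hkα : β / (α * h ^ 2) = k / α := by rw [hk, div_div, mul_comm α (h ^ 2)]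
  have hc' : α / (2 * cc ^ 2) + k + 2 * (ss ^ 2 / cc ^ 2) * k * (k / α + 1) < c := by
    rw [htan, div_pow, hkα] at hc
    exact hc
  have t1 : α / (2 * cc ^ 2) * (2 * α * cc ^ 2) = α * α := by field_simp
  have t2 : (2 * (ss ^ 2 / cc ^ 2) * k * (k / α + 1)) * (2 * α * cc ^ 2)
      = 4 * ss ^ 2 * (k * k + k * α) := by field_simp; ring
  have e1 : (α / (2 * cc ^ 2) + k + 2 * (ss ^ 2 / cc ^ 2) * k * (k / α + 1)) * (2 * α * cc ^ 2)
      = (α + 2 * k * ss ^ 2) * (α + 2 * k) := by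
    calc (α / (2 * cc ^ 2) + k + 2 * (ss ^ 2 / cc ^ 2) * k * (k / α + 1)) * (2 * α * cc ^ 2)
        = α / (2 * cc ^ 2) * (2 * α * cc ^ 2) + k * (2 * α * cc ^ 2)
          + (2 * (ss ^ 2 / cc ^ 2) * k * (k / α + 1)) * (2 * α * cc ^ 2) := by ring
      _ = α * α + k * (2 * α * cc ^ 2) + 4 * ss ^ 2 * (k * k + k * α) := by rw [t1, t2]
      _ = (α + 2 * k * ss ^ 2) * (α + 2 * k) := by linear_combination (2 * α * k) * hpyth
  have hmaster : p * (α + 2 * k) < c * (2 * α * cc ^ 2) := by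
    have h2a : (0:ℝ) < 2 * α * cc ^ 2 := by positivity
    have hmm := mul_lt_mul_of_pos_right hc' h2a
    rw [e1] at hmm
    rw [hpe]
    exact hmm
  -- key positivity
  have hKey : 0 < α * c * s ^ 2 + p * q * s - p ^ 2 * (1 - co) := by
    have hE : α * c * s ^ 2 + p * q * s - p ^ 2 * (1 - co)
        = 2 * ss ^ 2 * (c * (2 * α * cc ^ 2) - p * (α + 2 * k)) := by
      rw [hq, hpe, hsin, hco]
      linear_combination (-(4 * k * ss ^ 2 * (α + 2 * k * ss ^ 2))) * hpyth
    rw [hE]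
    have h1 : 0 < ss ^ 2 := pow_pos hss0 2
    have h2 : 0 < c * (2 * α * cc ^ 2) - p * (α + 2 * k) := sub_pos.mpr hmaster
    exact mul_pos (by linarith) h2
  obtain ⟨x, hx⟩ : ∃ x : ℝ, x = p ^ 2 - q ^ 2 - 4 * α * c * (1 - co) := ⟨_, rfl⟩
  obtain ⟨y, hy⟩ : ∃ y : ℝ, y = 2 * p * q + 4 * α * c * s := ⟨_, rfl⟩
  have hGpos : 0 < y ^ 2 + 4 * p ^ 2 * x - 4 * p ^ 4 := by
    have hG : y ^ 2 + 4 * p ^ 2 * x - 4 * p ^ 4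
        = 16 * α * c * (α * c * s ^ 2 + p * q * s - p ^ 2 * (1 - co)) := by
      rw [hx, hy]; ring
    rw [hG]
    have h16 : (0:ℝ) < 16 * α * c := by
      rw [mul_assoc]; exact mul_pos (by norm_num) (mul_pos hα hc0)
    exact mul_pos h16 hKey
  obtain ⟨m, hm⟩ : ∃ m : ℝ, m = Real.sqrt (x ^ 2 + y ^ 2) := ⟨_, rfl⟩
  have hm0 : 0 ≤ m := hm ▸ Real.sqrt_nonneg _
  have hm2 : m ^ 2 = x ^ 2 + y ^ 2 := by rw [hm]; exact Real.sq_sqrt (by positivity)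
  have hmx : 2 * p ^ 2 - x < m := aux_mgt p x y m hGpos hm0 hm2
  have hmpx : 0 < m + x := by linarith [pow_pos hp0 2]
  have hmmx : 0 ≤ m - x := aux_mge x y m hm0 hm2
  obtain ⟨u, hu⟩ : ∃ u : ℝ, u = Real.sqrt ((m + x) / 2) := ⟨_, rfl⟩
  have hu0 : 0 ≤ u := hu ▸ Real.sqrt_nonneg _
  have hu2 : u ^ 2 = (m + x) / 2 := by rw [hu]; exact Real.sq_sqrt (by linarith)
  obtain ⟨v, hv⟩ : ∃ v : ℝ,
      v = if 0 ≤ y then Real.sqrt ((m - x) / 2) else -Real.sqrt ((m - x) / 2) := ⟨_, rfl⟩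
  have hv2 : v ^ 2 = (m - x) / 2 := by
    rw [hv]; split_ifs
    · exact Real.sq_sqrt (by linarith)
    · rw [show (-Real.sqrt ((m - x) / 2)) ^ 2 = Real.sqrt ((m - x) / 2) ^ 2 by ring]
      exact Real.sq_sqrt (by linarith)
  have hprod : ((m + x) / 2) * ((m - x) / 2) = (y / 2) ^ 2 := by linear_combination hm2 / 4
  have hsq : Real.sqrt ((m + x) / 2) * Real.sqrt ((m - x) / 2) = |y| / 2 := by
    rw [← Real.sqrt_mul (by linarith), hprod, Real.sqrt_sq_eq_abs, abs_div]
    norm_num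
  have huv : 2 * u * v = y := by
    rw [hv, hu]; split_ifs with hy0
    · rw [mul_assoc, hsq, _root_.abs_of_nonneg hy0]; ring
    · rw [mul_assoc, mul_neg, hsq, _root_.abs_of_neg (not_le.mp hy0)]; ring
  have hup : p < u := by
    refine aux_ult p u hu0 hp0 ?_
    rw [hu2]; linarith
  -- complex relations
  have hre : u ^ 2 - v ^ 2 = p ^ 2 - q ^ 2 - 4 * α * c * (1 - co) := by
    rw [hu2, hv2, hx]; ring
  have him : 2 * u * v = 2 * p * q + 4 * α * c * s := by rw [huv, hy]
  have hreC : ((u:ℂ)) ^ 2 - (v:ℂ) ^ 2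
      = (p:ℂ) ^ 2 - (q:ℂ) ^ 2 - 4 * (α:ℂ) * (c:ℂ) * (1 - (co:ℂ)) := by exact_mod_cast hre
  have himC : 2 * (u:ℂ) * (v:ℂ) = 2 * (p:ℂ) * (q:ℂ) + 4 * (α:ℂ) * (c:ℂ) * (s:ℂ) := by
    exact_mod_cast him
  have hwD : ((u:ℂ) + (v:ℂ) * I) ^ 2
      = ((p:ℂ) + (q:ℂ) * I) ^ 2 + 4 * (α:ℂ) * (c:ℂ) * ((co:ℂ) - 1 + (s:ℂ) * I) := by
    linear_combination hreC + Complex.I * himC + ((v:ℂ) ^ 2 - (q:ℂ) ^ 2) * Complex.I_sq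
  have hexp : Complex.exp (Complex.I * a) = (co:ℂ) + (s:ℂ) * I := by
    rw [mul_comm Complex.I (a:ℂ), Complex.exp_mul_I, hcodef, hsdef,
      Complex.ofReal_cos, Complex.ofReal_sin]
  have hkC : ((β:ℂ)) / (h:ℂ) ^ 2 = (k:ℂ) := by rw [hk]; push_cast; ring
  have hBC : (α:ℂ) - (k:ℂ) * ((co:ℂ) + (s:ℂ) * I - 1) = (p:ℂ) + (q:ℂ) * I := by
    rw [hp, hq]; push_cast; ring
  refine ⟨(((u - p) / 2 : ℝ) : ℂ) + (((v - q) / 2 : ℝ) : ℂ) * I, ?_, ?_⟩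
  · simp only [Complex.add_re, Complex.ofReal_re, Complex.mul_re, Complex.I_re,
      Complex.I_im, Complex.ofReal_im, mul_zero, zero_mul, mul_one, sub_zero, zero_sub, add_zero]
    norm_num
    linarith
  · rw [hexp, hkC, hBC]
    push_cast
    linear_combination hwD / 4
end

section
/- Let α > 0, β ≥ 0, h > 0 and a ∈ (0, 2π) with a ≠ π. If 0 < c < F(a) := α/(2cos²(a/2)) + β/h² + 2tan²(a/2)·(β/h²)·(β/(αh²) + 1), then every complex root z of z² + (α − (β/h²)(e^{ia} − 1))·z − α·c·(e^{ia} − 1) = 0 has Re(z) < 0. That is, below the critical curve the Fourier mode a is linearly stable. -/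
open Real Complex

/-- Routh–Hurwitz criterion for a complex quadratic `z² + (a1+i b1) z + (a0+i b0)`:
if `a1 > 0`, `a0 > 0` and `a1² a0 + a1 b1 b0 − b0² > 0`, any root has negative real part. -/
lemma hurwitz_quadratic (a1 b1 a0 b0 x y : ℝ) (ha1 : 0 < a1) (ha0 : 0 < a0)
    (hD : 0 < a1^2*a0 + a1*b1*b0 - b0^2)
    (h1 : x^2 - y^2 + a1*x - b1*y + a0 = 0)
    (h2 : 2*x*y + a1*y + b1*x + b0 = 0) : x < 0 := by
  by_contra hx
  push_neg at hx
  set w : ℝ := 2*x + a1 with hw'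
  have hw : 0 < w := by positivity
  have h2' : y*w + b1*x + b0 = 0 := by rw [hw']; ring_nf; ring_nf at h2; linarith
  have hG : 4*x^4 + 8*a1*x^3 + (5*a1^2 + 4*a0 + b1^2)*x^2
      + a1*(a1^2 + 4*a0 + b1^2)*x + (a1^2*a0 + a1*b1*b0 - b0^2) = 0 := by
    linear_combination w^2 * h1 + (y*w - b1*x - b0 + b1*w) * h2'
  have t1 : (0:ℝ) ≤ 4*x^4 := by positivity
  have t2 : (0:ℝ) ≤ 8*a1*x^3 := by positivity
  have t3 : (0:ℝ) ≤ (5*a1^2 + 4*a0 + b1^2)*x^2 := by positivity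
  have t4 : (0:ℝ) ≤ a1*(a1^2 + 4*a0 + b1^2)*x := by positivity
  linarith

set_option maxHeartbeats 1600000 in
/-- Below the critical curve the Fourier mode `a` is linearly stable: if
`0 < c < F(a) = α/(2 cos²(a/2)) + β/h² + 2 tan²(a/2) (β/h²)(β/(α h²) + 1)`,
then every root of the characteristic quadratic has strictly negative real part. -/
theorem stability_below_critical_curve
    (α β h c : ℝ) (hα : 0 < α) (hβ : 0 ≤ β) (hh : 0 < h)
    (a : ℝ) (ha : a ∈ Set.Ioo (0 : ℝ) (2 * Real.pi)) (haπ : a ≠ Real.pi)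
    (hc0 : 0 < c)
    (hc : c < α / (2 * Real.cos (a / 2) ^ 2) + β / h ^ 2
        + 2 * Real.tan (a / 2) ^ 2 * (β / h ^ 2) * (β / (α * h ^ 2) + 1)) :
    ∀ z : ℂ,
      z ^ 2 + ((α : ℂ) - ((β : ℂ) / (h : ℂ) ^ 2) * (Complex.exp (Complex.I * a) - 1)) * z
        - (α : ℂ) * (c : ℂ) * (Complex.exp (Complex.I * a) - 1) = 0 →
      z.re < 0 := by
  intro z heq
  obtain ⟨ha0, ha2⟩ := ha
  have hhalf0 : 0 < a/2 := by linarith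
  have hhalfπ : a/2 < Real.pi := by linarith
  have hs : 0 < Real.sin (a/2) := Real.sin_pos_of_pos_of_lt_pi hhalf0 hhalfπ
  have hco : Real.cos (a/2) ≠ 0 := by
    rcases lt_trichotomy (a/2) (Real.pi/2) with hlt | heq' | hgt
    · exact ne_of_gt (Real.cos_pos_of_mem_Ioo ⟨by linarith [Real.pi_pos], hlt⟩)
    · exact absurd (by linarith : a = Real.pi) haπ
    · exact ne_of_lt (Real.cos_neg_of_pi_div_two_lt_of_lt hgt (by linarith [Real.pi_pos]))
  have hpyth : Real.sin (a/2)^2 + Real.cos (a/2)^2 = 1 := Real.sin_sq_add_cos_sq (a/2)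
  have hcos : Real.cos a = 2*Real.cos (a/2)^2 - 1 := by
    have := Real.cos_two_mul (a/2); rwa [show 2*(a/2) = a by ring] at this
  have hsin : Real.sin a = 2*Real.sin (a/2)*Real.cos (a/2) := by
    have := Real.sin_two_mul (a/2); rwa [show 2*(a/2) = a by ring] at this
  have htan : Real.tan (a/2) = Real.sin (a/2) / Real.cos (a/2) :=
    Real.tan_eq_sin_div_cos (a/2)
  rw [htan] at hc
  -- abstract away the trig functions
  obtain ⟨s, hs'⟩ : ∃ s, Real.sin (a/2) = s := ⟨_, rfl⟩
  obtain ⟨co, hco'⟩ : ∃ co, Real.cos (a/2) = co := ⟨_, rfl⟩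
  rw [hs'] at hs
  rw [hco'] at hco hcos
  rw [hs', hco'] at hpyth hsin hc
  have hco2 : 0 < co^2 := by positivity
  obtain ⟨k, hk⟩ : ∃ k, β / h^2 = k := ⟨_, rfl⟩
  have hkpos : 0 ≤ k := hk ▸ by positivity
  rw [hk] at hc
  have hβk : β / (α * h^2) = k / α := by rw [← hk, mul_comm, ← div_div]
  rw [hβk] at hc
  -- the hypothesis c < F(a), with denominators cleared
  have hE : α*c*(2*co^2) < (α + 2*k*s^2)^2 + (α + 2*k*s^2)*k*(2*co^2) := by
    have h2co : (0:ℝ) < 2*co^2*α := by positivity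
    have hc2 := (mul_lt_mul_iff_right₀ h2co).mpr hc
    have hrhs : 2*co^2*α * (α / (2 * co ^ 2) + k + 2 * (s/co) ^ 2 * k * (k / α + 1))
        = (α + 2*k*s^2)^2 + (α + 2*k*s^2)*k*(2*co^2) := by
      rw [div_pow, show s^2 = 1 - co^2 by linarith]
      field_simp
      ring
    rw [hrhs] at hc2
    linarith
  -- extract real and imaginary parts of the root equation
  have hkc : (β : ℂ) / (h : ℂ)^2 = (k : ℂ) := by
    rw [← hk]; push_cast; ring
  have hexp : Complex.exp (Complex.I * a) = (Real.cos a : ℂ) + (Real.sin a : ℂ) * Complex.I := by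
    rw [mul_comm, Complex.exp_mul_I]; push_cast; rfl
  rw [hexp, hkc] at heq
  obtain ⟨x, hx⟩ : ∃ x, z.re = x := ⟨_, rfl⟩
  obtain ⟨y, hy⟩ : ∃ y, z.im = y := ⟨_, rfl⟩
  have hz : z = (x:ℂ) + (y:ℂ)*Complex.I := by
    rw [← hx, ← hy]; exact (Complex.re_add_im z).symm
  rw [hz] at heq
  have hre := congrArg Complex.re heq
  have him := congrArg Complex.im heq
  simp only [Complex.add_re, Complex.sub_re, Complex.mul_re, Complex.mul_im, Complex.add_im,
    Complex.sub_im, pow_two, Complex.ofReal_re, Complex.ofReal_im, Complex.I_re, Complex.I_im,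
    Complex.one_re, Complex.one_im, Complex.zero_re, Complex.zero_im] at hre him
  rw [hcos, hsin] at hre him
  -- apply the Hurwitz criterion
  rw [hx]
  have hcoslt : Real.cos a < 1 := by nlinarith [mul_pos hs hs]
  rw [hcos] at hcoslt
  refine hurwitz_quadratic (α + k*(1 - (2*co^2-1))) (-(k*(2*s*co))) (α*c*(1 - (2*co^2-1)))
      (-(α*c*(2*s*co))) x y ?_ ?_ ?_ ?_ ?_
  · nlinarith [mul_nonneg hkpos (mul_pos hs hs).le]
  · nlinarith [mul_pos (mul_pos hα hc0) (mul_pos hs hs)]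
  · have hfac : (α + k*(1 - (2*co^2-1)))^2*(α*c*(1 - (2*co^2-1)))
        + (α + k*(1 - (2*co^2-1)))*(-(k*(2*s*co)))*(-(α*c*(2*s*co)))
        - (-(α*c*(2*s*co)))^2
        = (2*α*c*s^2) * ((α + 2*k*s^2)^2 + (α + 2*k*s^2)*k*(2*co^2) - α*c*(2*co^2)) := by
      linear_combination (-2*α*c*(α+2*k*s^2)^2 - 8*α*c*k*s^2*(α+2*k*s^2)
        - 8*α*c*k^2*s^2*co^2 + 8*α*c*k*(α+2*k*s^2)*(s^2+co^2-1)
        + 8*α*c*k^2*s^2*(s^2+co^2-1) - 8*α*c*k^2*(s^2+co^2-1)^2) * hpyth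
    rw [hfac]
    have hEpos : (0:ℝ) < 2*α*c*s^2 := by positivity
    nlinarith [mul_pos hEpos (show (0:ℝ) < (α + 2*k*s^2)^2 + (α + 2*k*s^2)*k*(2*co^2) - α*c*(2*co^2) by linarith)]
  · linear_combination hre
  · linear_combination him
end

section
/- Let α > 0, β ≥ 0, h > 0 and let c be a real number with c > α/2 + β/h². Then there exists a₀ ∈ (0, π) such that for every a ∈ (0, a₀) there exists z ∈ ℂ with Re(z) > 0 satisfying z² + (α − (β/h²)(e^{ia} − 1))·z − α·c·(e^{ia} − 1) = 0. In particular, for all sufficiently large numbers N of vehicles the mode a = 2π/N is linearly unstable, so the uniform steady state is unstable when V'(h) > α/2 + β/h². -/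
open Real Complex

set_option maxHeartbeats 1000000 in
/-- Instability above the global threshold: if `c > α/2 + β/h²` (with `c = V'(h)`),
then there exists `a₀ ∈ (0, π)` such that every Fourier mode `a ∈ (0, a₀)` is linearly
unstable, i.e. the characteristic quadratic has a root with strictly positive real part.
In particular, for all sufficiently large numbers `N` of vehicles the mode `a = 2π/N`
is linearly unstable. -/
theorem instability_above_threshold
    (α β h c : ℝ) (hα : 0 < α) (hβ : 0 ≤ β) (hh : 0 < h)
    (hc : α / 2 + β / h ^ 2 < c) :
    ∃ a₀ ∈ Set.Ioo (0 : ℝ) Real.pi, ∀ a ∈ Set.Ioo (0 : ℝ) a₀,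
      ∃ z : ℂ, 0 < z.re ∧
        z ^ 2 + ((α : ℂ) - ((β : ℂ) / (h : ℂ) ^ 2) * (Complex.exp (Complex.I * a) - 1)) * z
          - (α : ℂ) * (c : ℂ) * (Complex.exp (Complex.I * a) - 1) = 0 := by
  obtain ⟨K, hKdef⟩ : ∃ x : ℝ, x = β / h ^ 2 := ⟨_, rfl⟩
  rw [← hKdef] at hc
  have hK : 0 ≤ K := hKdef ▸ div_nonneg hβ (by positivity)
  have hcpos : 0 < c := by nlinarith
  have hacpos : 0 < α * c := mul_pos hα hcpos
  have hnum : 0 < α * (2 * c - α - 2 * K) := by nlinarith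
  obtain ⟨D, hDdef⟩ : ∃ x : ℝ, x = α * K + 2 * K ^ 2 + α * c := ⟨_, rfl⟩
  have hD : 0 < D := by rw [hDdef]; nlinarith [sq_nonneg K, mul_nonneg hα.le hK]
  obtain ⟨sstar, hsstardef⟩ : ∃ x : ℝ, x = α * (2 * c - α - 2 * K) / (2 * D) := ⟨_, rfl⟩
  have hsstar : 0 < sstar := hsstardef ▸ div_pos hnum (by linarith)
  refine ⟨min 1 (Real.sqrt sstar), ⟨lt_min one_pos (Real.sqrt_pos.mpr hsstar),
    lt_of_le_of_lt (min_le_left _ _) (by linarith [Real.pi_gt_three])⟩, ?_⟩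
  intro a ha
  obtain ⟨ha0, ha1⟩ := ha
  have haa : a < Real.sqrt sstar := lt_of_lt_of_le ha1 (min_le_right _ _)
  have ha2 : a ^ 2 < sstar := by
    have := Real.sq_sqrt hsstar.le
    nlinarith [Real.sqrt_nonneg sstar]
  -- s = sin(a/2)
  obtain ⟨s, hsdef⟩ : ∃ x : ℝ, x = Real.sin (a / 2) := ⟨_, rfl⟩
  have hs_pos : 0 < s := by
    rw [hsdef]
    apply Real.sin_pos_of_pos_of_lt_pi (by linarith)
    have : a ≤ 1 := le_of_lt (lt_of_lt_of_le ha1 (min_le_left _ _))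
    linarith [Real.pi_gt_three]
  have hs_lt : s < a / 2 := hsdef ▸ Real.sin_lt (by linarith)
  have hs2 : s ^ 2 < sstar := by nlinarith
  have hs2D : 2 * D * s ^ 2 < α * (2 * c - α - 2 * K) := by
    rw [hsstardef] at hs2
    have h2 := (lt_div_iff₀ (by linarith : (0:ℝ) < 2 * D)).mp hs2
    linarith
  -- trig identities
  have hpyth : Real.sin (a / 2) ^ 2 + Real.cos (a / 2) ^ 2 = 1 := Real.sin_sq_add_cos_sq _
  have hcc : Real.cos (a / 2) ^ 2 = 1 - s ^ 2 := by rw [hsdef]; nlinarith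
  have hCv : Real.cos a = 1 - 2 * s ^ 2 := by
    have h2 : Real.cos (2 * (a / 2)) = 2 * Real.cos (a / 2) ^ 2 - 1 := Real.cos_two_mul _
    rw [show 2 * (a / 2) = a by ring] at h2
    rw [h2, hcc]; ring
  have hSv : Real.sin a = 2 * s * Real.cos (a / 2) := by
    have h2 : Real.sin (2 * (a / 2)) = 2 * Real.sin (a / 2) * Real.cos (a / 2) :=
      Real.sin_two_mul _
    rw [show 2 * (a / 2) = a by ring] at h2
    rw [hsdef, h2]
  -- coefficients
  set E : ℂ := Complex.exp (Complex.I * (a : ℂ)) with hEdef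
  have hexp : E = (Real.cos a : ℂ) + (Real.sin a : ℂ) * Complex.I := by
    rw [hEdef, mul_comm, Complex.exp_mul_I, ← Complex.ofReal_cos, ← Complex.ofReal_sin]
  set b : ℂ := (α : ℂ) - ((β : ℂ) / (h : ℂ) ^ 2) * (E - 1) with hbdef
  set d : ℂ := -((α : ℂ) * (c : ℂ) * (E - 1)) with hddef
  have hKc : ((β : ℂ) / (h : ℂ) ^ 2) = ((K : ℝ) : ℂ) := by
    rw [hKdef]; push_cast; ring
  have hb : b = ((α + K * (1 - Real.cos a) : ℝ) : ℂ) + ((-(K * Real.sin a) : ℝ) : ℂ) * Complex.I := by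
    rw [hbdef, hKc, hexp]; push_cast; ring
  have hd : d = ((α * c * (1 - Real.cos a) : ℝ) : ℂ) + ((-(α * c * Real.sin a) : ℝ) : ℂ) * Complex.I := by
    rw [hddef, hexp]; push_cast; ring
  have hbre : b.re = α + K * (1 - Real.cos a) := by
    rw [hb]; simp only [Complex.add_re, Complex.mul_re, Complex.ofReal_re, Complex.ofReal_im,
      Complex.I_re, Complex.I_im]; ring
  have hbim : b.im = -(K * Real.sin a) := by
    rw [hb]; simp only [Complex.add_im, Complex.mul_im, Complex.ofReal_re, Complex.ofReal_im,
      Complex.I_re, Complex.I_im]; ring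
  have hdre : d.re = α * c * (1 - Real.cos a) := by
    rw [hd]; simp only [Complex.add_re, Complex.mul_re, Complex.ofReal_re, Complex.ofReal_im,
      Complex.I_re, Complex.I_im]; ring
  have hdim : d.im = -(α * c * Real.sin a) := by
    rw [hd]; simp only [Complex.add_im, Complex.mul_im, Complex.ofReal_re, Complex.ofReal_im,
      Complex.I_re, Complex.I_im]; ring
  -- roots
  obtain ⟨w, hw⟩ := IsAlgClosed.exists_pow_nat_eq (b ^ 2 - 4 * d) (n := 2) (by norm_num)
  obtain ⟨z₁, hz1def⟩ : ∃ x : ℂ, x = (-b + w) / 2 := ⟨_, rfl⟩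
  obtain ⟨z₂, hz2def⟩ : ∃ x : ℂ, x = (-b - w) / 2 := ⟨_, rfl⟩
  have hroot1 : z₁ ^ 2 + b * z₁ + d = 0 := by
    rw [hz1def]; linear_combination (1/4 : ℂ) * hw
  have hroot2 : z₂ ^ 2 + b * z₂ + d = 0 := by
    rw [hz2def]; linear_combination (1/4 : ℂ) * hw
  have hsum : z₁ + z₂ = -b := by rw [hz1def, hz2def]; ring
  have hprod : z₁ * z₂ = d := by
    rw [hz1def, hz2def]; linear_combination (-(1/4) : ℂ) * hw
  have hsum_re : z₁.re + z₂.re = -b.re := by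
    have := congrArg Complex.re hsum; simpa using this
  have hsum_im : z₁.im + z₂.im = -b.im := by
    have := congrArg Complex.im hsum; simpa using this
  have hprod_re : z₁.re * z₂.re - z₁.im * z₂.im = d.re := by
    have := congrArg Complex.re hprod; simpa [Complex.mul_re] using this
  have hprod_im : z₁.re * z₂.im + z₁.im * z₂.re = d.im := by
    have := congrArg Complex.im hprod; simpa [Complex.mul_im] using this
  -- the Hurwitz quantity is negative
  have hEneg : b.re ^ 2 * d.re + b.re * b.im * d.im - d.im ^ 2 < 0 := by
    rw [hbre, hbim, hdre, hdim]
    have hkey : (α + K * (1 - Real.cos a)) ^ 2 * (α * c * (1 - Real.cos a)) +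
        (α + K * (1 - Real.cos a)) * (-(K * Real.sin a)) * (-(α * c * Real.sin a)) -
        (-(α * c * Real.sin a)) ^ 2 =
        α * c * (2 * s ^ 2) * (α * (α + 2 * K - 2 * c) + 2 * s ^ 2 * D) := by
      rw [hCv, hSv, hDdef]
      linear_combination (α * c * 4 * s ^ 2 * (K * (α + 2 * K * s ^ 2) - α * c)) * hcc
    rw [hkey]
    have hG : α * (α + 2 * K - 2 * c) + 2 * s ^ 2 * D < 0 := by linarith only [hs2D]
    have hpos : 0 < α * c * (2 * s ^ 2) := by positivity
    exact mul_neg_of_pos_of_neg hpos hG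
  -- conclude: not both roots have nonpositive real part
  have hnot : ¬ (z₁.re ≤ 0 ∧ z₂.re ≤ 0) := by
    rintro ⟨hx1, hx2⟩
    have hid : b.re ^ 2 * d.re + b.re * b.im * d.im - d.im ^ 2 =
        (z₁.re * z₂.re) * ((z₁.re + z₂.re) ^ 2 + (z₁.im - z₂.im) ^ 2) := by
      have hb1 : b.re = -(z₁.re + z₂.re) := by linarith
      have hb2 : b.im = -(z₁.im + z₂.im) := by linarith
      have hd1 : d.re = z₁.re * z₂.re - z₁.im * z₂.im := hprod_re.symm
      have hd2 : d.im = z₁.re * z₂.im + z₁.im * z₂.re := hprod_im.symm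
      rw [hb1, hb2, hd1, hd2]; ring
    have hxx : 0 ≤ z₁.re * z₂.re := by
      have h' := mul_nonneg (neg_nonneg.mpr hx1) (neg_nonneg.mpr hx2)
      rw [neg_mul_neg] at h'; exact h'
    have hnn : 0 ≤ (z₁.re * z₂.re) * ((z₁.re + z₂.re) ^ 2 + (z₁.im - z₂.im) ^ 2) :=
      mul_nonneg hxx (by positivity)
    rw [hid] at hEneg
    linarith only [hEneg, hnn]
  rcases not_and_or.mp hnot with hx | hx
  · exact ⟨z₁, lt_of_not_ge hx, by linear_combination hroot1⟩
  · exact ⟨z₂, lt_of_not_ge hx, by linear_combination hroot2⟩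
end

section
/- Let α > 0, β ≥ 0, d_s > 0, and let h̄₁, h̄₂ be real numbers with 2·d_s < h̄₁. Suppose V₁, V₂ : ℝ → ℝ with V₁ strictly increasing on (d_s, ∞) and V₁(h̄₁) = V₂(h̄₂). Then for every d₁ ∈ (d_s, h̄₁ − d_s), α·(V₁(d₁) − V₂(h̄₂)) + (β/d₁²)·(V₁(h̄₁) − V₂(h̄₂)) < 0. Hence at the two-lane equilibrium the incentive criterion for a lane change from lane 2 to lane 1 is never satisfied, and the equilibrium configuration produces no lane changes. -/
/-- At the two-lane equilibrium (lane 1 with headway `h̄₁`, lane 2 with headway `h̄₂`,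
common velocity `V₁(h̄₁) = V₂(h̄₂)`), the incentive criterion for a lane change from
lane 2 to lane 1 is never satisfied: for every admissible gap `d₁ ∈ (d_s, h̄₁ - d_s)`,
the acceleration gain `α (V₁(d₁) - V₂(h̄₂)) + (β/d₁²)(V₁(h̄₁) - V₂(h̄₂))` is negative.
Hence the equilibrium configuration produces no lane changes. -/
theorem no_lane_change_two_to_one_at_equilibrium
    (α β ds h₁ h₂ : ℝ) (hα : 0 < α) (hβ : 0 ≤ β) (hds : 0 < ds)
    (hh₁ : 2 * ds < h₁)
    (V₁ V₂ : ℝ → ℝ)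
    (hV₁ : StrictMonoOn V₁ (Set.Ioi ds))
    (heq : V₁ h₁ = V₂ h₂) :
    ∀ d₁ ∈ Set.Ioo ds (h₁ - ds),
      α * (V₁ d₁ - V₂ h₂) + (β / d₁ ^ 2) * (V₁ h₁ - V₂ h₂) < 0 := by
  intro d₁ hd
  obtain ⟨h1, h2⟩ := hd
  have hlt : V₁ d₁ < V₁ h₁ := hV₁ h1 (by simp; linarith) (by linarith)
  have : V₁ h₁ - V₂ h₂ = 0 := by rw [heq]; ring
  rw [this]
  nlinarith
end

section
/- Let α > 0, β ≥ 0, d_s > 0, ε ≥ 0, and let h̄₁, h̄₂ ∈ ℝ with 2·d_s < h̄₂. Suppose V₁, V₂ : ℝ → ℝ with V₂ strictly increasing on (d_s, ∞), V₁ nondecreasing on [h̄₁, ∞), and V₁(h̄₁) = V₂(h̄₂). Then for every d₂ ∈ (d_s, h̄₂ − d_s), α·(V₂(d₂) − V₁(h̄₁ + ε)) + (β/d₂²)·(V₂(h̄₂) − V₁(h̄₁ + ε)) < 0. Hence a nonnegative perturbation of the headways of lane 1 never activates lane changes from lane 1 to lane 2. -/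
/-- A nonnegative perturbation `ε ≥ 0` of the headways of lane 1 (vehicles travelling
at `V₁(h̄₁ + ε)`) never activates lane changes from lane 1 to lane 2: for every
admissible gap `d₂ ∈ (d_s, h̄₂ - d_s)` in lane 2, the acceleration gain
`α (V₂(d₂) - V₁(h̄₁+ε)) + (β/d₂²)(V₂(h̄₂) - V₁(h̄₁+ε))` is negative. -/
theorem no_lane_change_one_to_two_nonnegative_perturbation
    (α β ds ε h₁ h₂ : ℝ) (hα : 0 < α) (hβ : 0 ≤ β) (hds : 0 < ds) (hε : 0 ≤ ε)
    (hh₂ : 2 * ds < h₂)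
    (V₁ V₂ : ℝ → ℝ)
    (hV₂ : StrictMonoOn V₂ (Set.Ioi ds))
    (hV₁ : MonotoneOn V₁ (Set.Ici h₁))
    (heq : V₁ h₁ = V₂ h₂) :
    ∀ d₂ ∈ Set.Ioo ds (h₂ - ds),
      α * (V₂ d₂ - V₁ (h₁ + ε)) + (β / d₂ ^ 2) * (V₂ h₂ - V₁ (h₁ + ε)) < 0 := by
  intro d₂ hd₂
  obtain ⟨hd1, hd2⟩ := hd₂
  have hd₂h₂ : d₂ < h₂ := lt_of_lt_of_le hd2 (by linarith)
  have hmemd : d₂ ∈ Set.Ioi ds := hd1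
  have hmemh : h₂ ∈ Set.Ioi ds := by simp; linarith
  have h1 : V₂ d₂ < V₂ h₂ := hV₂ hmemd hmemh hd₂h₂
  have h2 : V₁ h₁ ≤ V₁ (h₁ + ε) := hV₁ (le_refl h₁ : h₁ ∈ Set.Ici h₁) (by simp [hε] : h₁ + ε ∈ Set.Ici h₁) (by linarith)
  have ha : α * (V₂ d₂ - V₁ (h₁ + ε)) < 0 := mul_neg_of_pos_of_neg hα (by linarith [heq])
  have hb : (β / d₂ ^ 2) * (V₂ h₂ - V₁ (h₁ + ε)) ≤ 0 :=
    mul_nonpos_of_nonneg_of_nonpos (div_nonneg hβ (by positivity)) (by linarith [heq])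
  linarith
end

section
/- Let α > 0, β ≥ 0, d_s > 0, ε ≥ 0, and let h̄₁, h̄₂ ∈ ℝ with 2·d_s < h̄₁. Suppose V₁, V₂ : ℝ → ℝ with V₁ strictly increasing on (d_s, ∞), V₂ nondecreasing on [h̄₂, ∞), and V₁(h̄₁) = V₂(h̄₂). Then for every d₁ ∈ (d_s, h̄₁ − d_s), α·(V₁(d₁) − V₂(h̄₂ + ε)) + (β/d₁²)·(V₁(h̄₁) − V₂(h̄₂ + ε)) < 0. Hence a nonnegative perturbation of the headways of lane 2 never activates lane changes from lane 2 to lane 1. -/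
/-- A nonnegative perturbation `ε ≥ 0` of the headways of lane 2 (vehicles travelling
at `V₂(h̄₂ + ε)`) never activates lane changes from lane 2 to lane 1: for every
admissible gap `d₁ ∈ (d_s, h̄₁ - d_s)` in lane 1, the acceleration gain
`α (V₁(d₁) - V₂(h̄₂+ε)) + (β/d₁²)(V₁(h̄₁) - V₂(h̄₂+ε))` is negative. -/
theorem no_lane_change_two_to_one_nonnegative_perturbation
    (α β ds ε h₁ h₂ : ℝ) (hα : 0 < α) (hβ : 0 ≤ β) (hds : 0 < ds) (hε : 0 ≤ ε)
    (hh₁ : 2 * ds < h₁)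
    (V₁ V₂ : ℝ → ℝ)
    (hV₁ : StrictMonoOn V₁ (Set.Ioi ds))
    (hV₂ : MonotoneOn V₂ (Set.Ici h₂))
    (heq : V₁ h₁ = V₂ h₂) :
    ∀ d₁ ∈ Set.Ioo ds (h₁ - ds),
      α * (V₁ d₁ - V₂ (h₂ + ε)) + (β / d₁ ^ 2) * (V₁ h₁ - V₂ (h₂ + ε)) < 0 := by
  rintro d₁ ⟨hd₁, hd₂⟩
  have hdh : d₁ < h₁ := by linarith
  have hh₁ds : h₁ ∈ Set.Ioi ds := by simp only [Set.mem_Ioi]; linarith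
  have hVlt : V₁ d₁ < V₁ h₁ := hV₁ (Set.mem_Ioi.2 hd₁) hh₁ds hdh
  have hV₂le : V₂ h₂ ≤ V₂ (h₂ + ε) :=
    hV₂ (Set.mem_Ici.2 le_rfl) (Set.mem_Ici.2 (by linarith)) (by linarith)
  have h1 : α * (V₁ d₁ - V₂ (h₂ + ε)) < 0 := by
    apply mul_neg_of_pos_of_neg hα; linarith [heq ▸ hVlt]
  have h2 : (β / d₁ ^ 2) * (V₁ h₁ - V₂ (h₂ + ε)) ≤ 0 := by
    apply mul_nonpos_of_nonneg_of_nonpos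
    · positivity
    · linarith [heq ▸ hV₂le]
  linarith
end
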